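/- For an odd prime p, the count of weighted isomorphism classes of elliptic curves over 𝔽_p with at least one nonzero rational 2-torsion point satisfies S*_{2,0}(p) = Σ_{E/𝔽_p, E(𝔽_p)[2] ≠ 0} 1/|Aut(E)| = (2p − 1)/3. -/

import Mathlib

/-- The Weierstrass curve with coefficient tuple `(a₁, a₂, a₃, a₄, a₆)`. -/
def wcOf {R : Type*} [CommRing R] (v : R × R × R × R × R) : WeierstrassCurve R :=
  ⟨v.1, v.2.1, v.2.2.1, v.2.2.2.1, v.2.2.2.2⟩

/-- The number of rational points of a Weierstrass curve over a finite field: the point at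
infinity together with the affine solutions of the Weierstrass equation. -/
noncomputable def wcPointCount {R : Type*} [CommRing R] (W : WeierstrassCurve R) : ℕ :=
  1 + Nat.card {P : R × R // W.toAffine.Equation P.1 P.2}

open scoped Classical

open Finset

section Aux

variable {p : ℕ} [Fact p.Prime]

def Dlt (w : ZMod p × ZMod p × ZMod p) : ZMod p :=
  (wcOf ((0:ZMod p), w.1, 0, w.2.1, w.2.2)).Δ

def Rc (w : ZMod p × ZMod p × ZMod p) : Finset (ZMod p) :=
  Finset.univ.filter (fun x => x^3 + w.1*x^2 + w.2.1*x + w.2.2 = 0)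

lemma mem_Rc {w : ZMod p × ZMod p × ZMod p} {x : ZMod p} :
    x ∈ Rc w ↔ x^3 + w.1*x^2 + w.2.1*x + w.2.2 = 0 := by
  simp [Rc]

lemma delta_shift (a₁ a₂ a₃ a₄ a₆ : ZMod p) :
    (wcOf ((0:ZMod p), a₁^2 + 4*a₂, 0, 16*a₄ + 8*(a₁*a₃), 64*a₆ + 16*a₃^2)).Δ
      = 4096 * (wcOf (a₁, a₂, a₃, a₄, a₆)).Δ := by
  simp only [wcOf, WeierstrassCurve.Δ, WeierstrassCurve.b₂, WeierstrassCurve.b₄,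
    WeierstrassCurve.b₆, WeierstrassCurve.b₈]
  ring

lemma delta_factor (u s t : ZMod p) :
    Dlt (s - u, t - s*u, -(u*t)) = 16 * (u^2 + s*u + t)^2 * (s^2 - 4*t) := by
  simp only [Dlt, wcOf, WeierstrassCurve.Δ, WeierstrassCurve.b₂, WeierstrassCurve.b₄,
    WeierstrassCurve.b₆, WeierstrassCurve.b₈]
  ring

lemma delta_split (u v e : ZMod p) :
    Dlt (-(u+v+e), u*v+u*e+v*e, -(u*v*e)) = 16 * ((u-v)*(u-e)*(v-e))^2 := by
  simp only [Dlt, wcOf, WeierstrassCurve.Δ, WeierstrassCurve.b₂, WeierstrassCurve.b₄,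
    WeierstrassCurve.b₆, WeierstrassCurve.b₈]
  ring

lemma h16 (h2 : (2 : ZMod p) ≠ 0) : (16 : ZMod p) ≠ 0 := by
  have e : (16 : ZMod p) = 2^4 := by norm_num
  rw [e]; exact pow_ne_zero _ h2

lemma root_tuple {u a b c : ZMod p} (hu : u^3 + a*u^2 + b*u + c = 0) :
    (a, b, c) = ((a+u) - u, (u^2+a*u+b) - (a+u)*u, -(u*(u^2+a*u+b))) := by
  refine Prod.ext (by ring) (Prod.ext (by ring) ?_)
  simp only
  linear_combination hu

lemma two_root_tuple {u v a b c : ZMod p} (huv : u ≠ v)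
    (hu : u^3 + a*u^2 + b*u + c = 0) (hv : v^3 + a*v^2 + b*v + c = 0) :
    (a, b, c) = (-(u+v+(-(a+u+v))), u*v+u*(-(a+u+v))+v*(-(a+u+v)), -(u*v*(-(a+u+v)))) := by
  have hb : b = -(u^2+u*v+v^2) - a*(u+v) := by
    have h0 : (u - v) * (b - (-(u^2+u*v+v^2) - a*(u+v))) = 0 := by
      linear_combination hu - hv
    rcases mul_eq_zero.mp h0 with h | h
    · exact absurd (sub_eq_zero.mp h) huv
    · exact sub_eq_zero.mp h
  have hc : c = -(u^3 + a*u^2 + b*u) := by linear_combination hu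
  refine Prod.ext (by ring) (Prod.ext ?_ ?_) <;> simp only
  · linear_combination hb
  · linear_combination hc - u*hb

lemma cntM_bij (h2 : (2 : ZMod p) ≠ 0) :
    (univ.filter (fun z : ZMod p × (ZMod p × ZMod p × ZMod p) =>
      Dlt z.2 ≠ 0 ∧ z.1 ∈ Rc z.2)).card
    = (univ.filter (fun z : ZMod p × ZMod p × ZMod p =>
      z.1^2 + z.2.1*z.1 + z.2.2 ≠ 0 ∧ z.2.1^2 - 4*z.2.2 ≠ 0)).card := by
  refine Finset.card_bij'
    (fun z _ => (z.1, z.2.1 + z.1, z.1^2 + z.2.1*z.1 + z.2.2.1))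
    (fun y _ => (y.1, (y.2.1 - y.1, y.2.2 - y.2.1*y.1, -(y.1*y.2.2)))) ?hi ?hj ?li ?ri
  case hi =>
    rintro ⟨u, a, b, c⟩ hz
    simp only [mem_filter, mem_univ, true_and, mem_Rc] at hz ⊢
    obtain ⟨hΔ, hu⟩ := hz
    have hfac : Dlt (a, b, c) = 16 * (u^2 + (a+u)*u + (u^2+a*u+b))^2
        * ((a+u)^2 - 4*(u^2+a*u+b)) := by
      rw [root_tuple hu]; exact delta_factor u (a+u) (u^2+a*u+b)
    constructor
    · intro h
      apply hΔ
      rw [hfac]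
      rw [show u^2 + (a+u)*u + (u^2+a*u+b) = u^2 + (a+u)*u + (u^2+a*u+b) from rfl]
      have : u^2 + (a+u)*u + (u^2+a*u+b) = 0 := by linear_combination h
      rw [this]; ring
    · intro h
      apply hΔ
      rw [hfac]
      have : (a+u)^2 - 4*(u^2+a*u+b) = 0 := by linear_combination h
      rw [this]; ring
  case li =>
    rintro ⟨u, a, b, c⟩ hz
    simp only [mem_filter, mem_univ, true_and, mem_Rc] at hz
    obtain ⟨hΔ, hu⟩ := hz
    exact Prod.ext rfl (root_tuple hu).symm
  case ri =>
    rintro ⟨u, s, t⟩ hy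
    exact Prod.ext rfl (Prod.ext (by ring) (by ring))
  case hj =>
    rintro ⟨u, s, t⟩ hy
    simp only [mem_filter, mem_univ, true_and, mem_Rc] at hy ⊢
    obtain ⟨hq, hd⟩ := hy
    refine ⟨?_, by ring⟩
    have e0 : ((s - u : ZMod p), (t - s*u : ZMod p), (-(u*t) : ZMod p))
        = (s - u, t - s*u, -(u*t)) := rfl
    rw [show (Dlt ((s:ZMod p) - u, t - s*u, -(u*t))) = 16 * (u^2 + s*u + t)^2 * (s^2 - 4*t)
      from delta_factor u s t]
    exact mul_ne_zero (mul_ne_zero (h16 h2) (pow_ne_zero _ hq)) hd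

lemma cntM2_bij (h2 : (2 : ZMod p) ≠ 0) :
    (univ.filter (fun z : (ZMod p × ZMod p) × (ZMod p × ZMod p × ZMod p) =>
      z.1.1 ≠ z.1.2 ∧ Dlt z.2 ≠ 0 ∧ z.1.1 ∈ Rc z.2 ∧ z.1.2 ∈ Rc z.2)).card
    = (univ.filter (fun z : ZMod p × ZMod p × ZMod p =>
      z.1 ≠ z.2.1 ∧ z.1 ≠ z.2.2 ∧ z.2.1 ≠ z.2.2)).card := by
  refine Finset.card_bij'
    (fun z _ => (z.1.1, z.1.2, -(z.2.1 + z.1.1 + z.1.2)))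
    (fun y _ => ((y.1, y.2.1),
      (-(y.1 + y.2.1 + y.2.2), y.1*y.2.1 + y.1*y.2.2 + y.2.1*y.2.2, -(y.1*y.2.1*y.2.2)))) ?hi ?hj ?li ?ri
  case hi =>
    rintro ⟨⟨u, v⟩, a, b, c⟩ hz
    simp only [mem_filter, mem_univ, true_and, mem_Rc] at hz ⊢
    obtain ⟨huv, hΔ, hu, hv⟩ := hz
    have htup := two_root_tuple huv hu hv
    refine ⟨huv, ?_, ?_⟩
    · intro h
      apply hΔ
      rw [htup, delta_split]
      have h0 : u - -(a + u + v) = 0 := by linear_combination h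
      rw [h0]; ring
    · intro h
      apply hΔ
      rw [htup, delta_split]
      have h0 : v - -(a + u + v) = 0 := by linear_combination h
      rw [h0]; ring
  case li =>
    rintro ⟨⟨u, v⟩, a, b, c⟩ hz
    simp only [mem_filter, mem_univ, true_and, mem_Rc] at hz
    obtain ⟨huv, hΔ, hu, hv⟩ := hz
    exact Prod.ext rfl (two_root_tuple huv hu hv).symm
  case ri =>
    rintro ⟨u, v, e⟩ hy
    exact Prod.ext rfl (Prod.ext rfl (by ring))
  case hj =>
    rintro ⟨u, v, e⟩ hy
    simp only [mem_filter, mem_univ, true_and, mem_Rc] at hy ⊢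
    obtain ⟨huv, hue, hve⟩ := hy
    refine ⟨huv, ?_, by ring, by ring⟩
    rw [show Dlt (-(u+v+e), u*v+u*e+v*e, -(u*v*e)) = 16 * ((u-v)*(u-e)*(v-e))^2
      from delta_split u v e]
    exact mul_ne_zero (h16 h2) (pow_ne_zero _ (mul_ne_zero (mul_ne_zero
      (sub_ne_zero.mpr huv) (sub_ne_zero.mpr hue)) (sub_ne_zero.mpr hve)))

lemma quad_roots (h2 : (2 : ZMod p) ≠ 0) (s t : ZMod p) (hd : s^2 - 4*t ≠ 0)
    (v : ZMod p) (hv : v^2 + s*v + t = 0) :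
    (Finset.univ.filter (fun x : ZMod p => x^2 + s*x + t = 0)) = {v, -s-v} ∧ v ≠ -s-v := by
  have hne : v ≠ -s-v := by
    intro h
    have h' : s + 2*v = 0 := by linear_combination h
    exact hd (by linear_combination (s+2*v)*h' - 4*hv)
  refine ⟨?_, hne⟩
  ext x
  simp only [Finset.mem_filter, Finset.mem_univ, true_and, Finset.mem_insert,
    Finset.mem_singleton]
  constructor
  · intro hx
    have : (x - v) * (x + s + v) = 0 := by linear_combination hx - hv
    rcases mul_eq_zero.mp this with h | h
    · left; linear_combination h
    · right; linear_combination h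
  · rintro (rfl | rfl)
    · exact hv
    · linear_combination hv

lemma root_structure (h2 : (2 : ZMod p) ≠ 0) (w : ZMod p × ZMod p × ZMod p)
    (hΔ : Dlt w ≠ 0) : (Rc w).card = 0 ∨ (Rc w).card = 1 ∨ (Rc w).card = 3 := by
  obtain ⟨a, b, c⟩ := w
  rcases Finset.eq_empty_or_nonempty (Rc (a, b, c)) with he | ⟨u, hu⟩
  · left; rw [he]; rfl
  · have hu' : u^3 + a*u^2 + b*u + c = 0 := by
      simpa [Rc] using hu
    have hw : ((a, b, c) : ZMod p × ZMod p × ZMod p)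
        = ((a+u) - u, (u^2+a*u+b) - (a+u)*u, -(u*(u^2+a*u+b))) := by
      refine Prod.ext (by ring) (Prod.ext (by ring) ?_)
      simp only
      linear_combination hu'
    have hfac : Dlt (a, b, c)
        = 16 * (u^2 + (a+u)*u + (u^2+a*u+b))^2 * ((a+u)^2 - 4*(u^2+a*u+b)) := by
      rw [hw]; exact delta_factor u (a+u) (u^2+a*u+b)
    set s := a + u with hs
    set t := u^2 + a*u + b with ht
    have hq : u^2 + s*u + t ≠ 0 := by
      intro h; apply hΔ; rw [hfac, h]; ring
    have hd : s^2 - 4*t ≠ 0 := by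
      intro h; apply hΔ; rw [hfac, h]; ring
    have hid : ∀ x : ZMod p, x^3 + a*x^2 + b*x + c = (x - u) * (x^2 + s*x + t) := by
      intro x; rw [hs, ht]; linear_combination hu'
    have hRc : Rc (a, b, c) = insert u (Finset.univ.filter
        (fun x : ZMod p => x^2 + s*x + t = 0)) := by
      ext x
      simp only [Rc, Finset.mem_filter, Finset.mem_univ, true_and, Finset.mem_insert]
      rw [hid x, mul_eq_zero, sub_eq_zero]
    rcases Finset.eq_empty_or_nonempty (Finset.univ.filter
        (fun x : ZMod p => x^2 + s*x + t = 0)) with hQ | ⟨v, hv⟩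
    · right; left
      rw [hRc, hQ]; rfl
    · right; right
      have hv' : v^2 + s*v + t = 0 := by
        simpa using hv
      obtain ⟨hQ, hne⟩ := quad_roots h2 s t hd v hv'
      have huv : u ≠ v := by
        rintro rfl; exact hq hv'
      have husv : u ≠ -s-v := by
        intro h
        apply hq
        rw [h]; linear_combination hv'
      rw [hRc, hQ]
      rw [Finset.card_insert_of_notMem (by simp [huv, husv]),
        Finset.card_insert_of_notMem (by simpa using hne), Finset.card_singleton]

lemma pc_eq (a₁ a₂ a₃ a₄ a₆ : ZMod p) :
    wcPointCount (wcOf (a₁, a₂, a₃, a₄, a₆)) = 1 + (Finset.univ.filter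
      (fun P : ZMod p × ZMod p =>
        P.2^2 + a₁*P.1*P.2 + a₃*P.2 = P.1^3 + a₂*P.1^2 + a₄*P.1 + a₆)).card := by
  rw [wcPointCount]
  congr 1
  have : ∀ P : ZMod p × ZMod p, (wcOf (a₁, a₂, a₃, a₄, a₆)).toAffine.Equation P.1 P.2 ↔
      P.2^2 + a₁*P.1*P.2 + a₃*P.2 = P.1^3 + a₂*P.1^2 + a₄*P.1 + a₆ := fun P =>
    WeierstrassCurve.Affine.equation_iff _ _
  rw [Nat.card_congr (Equiv.subtypeEquivRight this)]
  rw [Nat.card_eq_fintype_card, Fintype.card_subtype]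

lemma pcount_shift (h2 : (2 : ZMod p) ≠ 0) (a₁ a₂ a₃ a₄ a₆ : ZMod p) :
    wcPointCount (wcOf (a₁, a₂, a₃, a₄, a₆))
      = wcPointCount (wcOf ((0:ZMod p), a₁^2 + 4*a₂, 0, 16*a₄ + 8*(a₁*a₃), 64*a₆ + 16*a₃^2)) := by
  have h4 : (4 : ZMod p) ≠ 0 := by
    have e : (4 : ZMod p) = 2^2 := by norm_num
    rw [e]; exact pow_ne_zero _ h2
  have h8 : (8 : ZMod p) ≠ 0 := by
    have e : (8 : ZMod p) = 2^3 := by norm_num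
    rw [e]; exact pow_ne_zero _ h2
  have h64 : (64 : ZMod p) ≠ 0 := by
    have e : (64 : ZMod p) = 2^6 := by norm_num
    rw [e]; exact pow_ne_zero _ h2
  rw [pc_eq, pc_eq]
  congr 1
  apply Finset.card_nbij' (fun P => (4*P.1, 8*P.2 + 4*a₁*P.1 + 4*a₃))
    (fun Q => (4⁻¹*Q.1, 8⁻¹*(Q.2 - a₁*Q.1 - 4*a₃)))
  · intro P hP
    simp only [Finset.mem_coe, Finset.mem_filter, Finset.mem_univ, true_and] at hP ⊢
    rw [← sub_eq_zero]
    have key : (8*P.2 + 4*a₁*P.1 + 4*a₃)^2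
        + 0*(4*P.1)*(8*P.2 + 4*a₁*P.1 + 4*a₃) + 0*(8*P.2 + 4*a₁*P.1 + 4*a₃)
        - ((4*P.1)^3 + (a₁^2 + 4*a₂)*(4*P.1)^2 + (16*a₄ + 8*(a₁*a₃))*(4*P.1)
          + (64*a₆ + 16*a₃^2))
        = 64 * (P.2^2 + a₁*P.1*P.2 + a₃*P.2 - (P.1^3 + a₂*P.1^2 + a₄*P.1 + a₆)) := by ring
    rw [key, sub_eq_zero.mpr hP, mul_zero]
  · intro Q hQ
    simp only [Finset.mem_coe, Finset.mem_filter, Finset.mem_univ, true_and] at hQ ⊢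
    set x := 4⁻¹*Q.1 with hx
    set y := 8⁻¹*(Q.2 - a₁*Q.1 - 4*a₃) with hy
    have e1 : 4*x = Q.1 := by rw [hx, ← mul_assoc, mul_inv_cancel₀ h4, one_mul]
    have e2 : 8*y + 4*a₁*x + 4*a₃ = Q.2 := by
      rw [hy, ← mul_assoc, mul_inv_cancel₀ h8, one_mul]
      rw [hx]; field_simp; ring
    have key : 64 * (y^2 + a₁*x*y + a₃*y - (x^3 + a₂*x^2 + a₄*x + a₆))
        = (8*y + 4*a₁*x + 4*a₃)^2
        - ((4*x)^3 + (a₁^2 + 4*a₂)*(4*x)^2 + (16*a₄ + 8*(a₁*a₃))*(4*x)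
          + (64*a₆ + 16*a₃^2)) := by ring
    rw [e1, e2] at key
    rw [← sub_eq_zero]
    have h0 : Q.2^2 - (Q.1^3 + (a₁^2 + 4*a₂)*Q.1^2 + (16*a₄ + 8*(a₁*a₃))*Q.1
        + (64*a₆ + 16*a₃^2)) = 0 := by
      rw [sub_eq_zero]; linear_combination hQ
    rw [h0] at key
    rcases mul_eq_zero.mp key with h | h
    · exact absurd h h64
    · exact h
  · intro P hP
    ext
    · simp only; field_simp
    · simp only; field_simp; ring
  · intro Q hQ
    ext
    · simp only; field_simp
    · simp only; field_simp; ring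

/-- number of square roots of d -/
lemma sqrt_card (h2 : (2 : ZMod p) ≠ 0) (d : ZMod p) :
    (Finset.univ.filter (fun y : ZMod p => y^2 = d)).card % 2
      = (if d = 0 then 1 else 0) := by
  by_cases hd : d = 0
  · subst hd
    rw [if_pos rfl]
    have : (Finset.univ.filter (fun y : ZMod p => y^2 = 0)) = {0} := by
      ext y; simp [pow_eq_zero_iff]
    rw [this]; rfl
  · rw [if_neg hd]
    rcases Finset.eq_empty_or_nonempty (Finset.univ.filter (fun y : ZMod p => y^2 = d))
      with he | ⟨y₀, hy₀⟩
    · rw [he]; rfl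
    · simp only [Finset.mem_filter, Finset.mem_univ, true_and] at hy₀
      have hy0 : y₀ ≠ 0 := fun h => hd (by rw [← hy₀, h]; ring)
      have hne : y₀ ≠ -y₀ := fun h => hy0 (by
        have : 2 * y₀ = 0 := by linear_combination h
        rcases mul_eq_zero.mp this with h' | h'
        · exact absurd h' h2
        · exact h')
      have : (Finset.univ.filter (fun y : ZMod p => y^2 = d)) = {y₀, -y₀} := by
        ext y
        simp only [Finset.mem_filter, Finset.mem_univ, true_and, Finset.mem_insert,
          Finset.mem_singleton]
        constructor
        · intro hy
          have : (y - y₀) * (y + y₀) = 0 := by linear_combination hy - hy₀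
          rcases mul_eq_zero.mp this with h' | h'
          · left; linear_combination h'
          · right; linear_combination h'
        · rintro (rfl | rfl)
          · exact hy₀
          · linear_combination hy₀
      rw [this, Finset.card_insert_of_notMem (by simpa using hne), Finset.card_singleton]

lemma parity_lemma (h2 : (2 : ZMod p) ≠ 0) (a b c : ZMod p) :
    (Even (wcPointCount (wcOf ((0:ZMod p), a, 0, b, c))) ↔
      Odd (Finset.univ.filter
        (fun x : ZMod p => x^3 + a*x^2 + b*x + c = 0)).card) := by
  rw [pc_eq, add_comm, Nat.even_add_one, Nat.not_even_iff_odd]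
  have hsimp : ∀ P : ZMod p × ZMod p,
      (P.2^2 + 0*P.1*P.2 + 0*P.2 = P.1^3 + a*P.1^2 + b*P.1 + c) ↔
      (P.2^2 = P.1^3 + a*P.1^2 + b*P.1 + c) := by
    intro P
    constructor
    · intro h; linear_combination h
    · intro h; linear_combination h
  rw [Nat.odd_iff, Nat.odd_iff]
  have step : ∀ x : ZMod p,
      (∑ y : ZMod p, if (x,y).2^2 + 0*(x,y).1*(x,y).2 + 0*(x,y).2
          = (x,y).1^3 + a*(x,y).1^2 + b*(x,y).1 + c then 1 else 0) % 2
        = (if x^3 + a*x^2 + b*x + c = 0 then 1 else 0) := by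
    intro x
    have e1 : (∑ y : ZMod p, if (x,y).2^2 + 0*(x,y).1*(x,y).2 + 0*(x,y).2
          = (x,y).1^3 + a*(x,y).1^2 + b*(x,y).1 + c then 1 else 0)
        = (Finset.univ.filter (fun y : ZMod p => y^2 = x^3 + a*x^2 + b*x + c)).card := by
      rw [Finset.card_filter]
      apply Finset.sum_congr rfl
      intro y _
      congr 1
      simp only [eq_iff_iff]
      exact hsimp (x, y)
    rw [e1, sqrt_card h2 (x^3 + a*x^2 + b*x + c)]
  have key : (Finset.univ.filter (fun P : ZMod p × ZMod p =>
        P.2^2 + 0*P.1*P.2 + 0*P.2 = P.1^3 + a*P.1^2 + b*P.1 + c)).card % 2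
      = (Finset.univ.filter (fun x : ZMod p => x^3 + a*x^2 + b*x + c = 0)).card % 2 := by
    rw [Finset.card_filter, Finset.card_filter, Fintype.sum_prod_type, Finset.sum_nat_mod,
      Finset.sum_congr rfl (fun x _ => step x)]
  rw [key]

lemma card_not_pair (A B : ZMod p) :
    (univ.filter (fun t : ZMod p => ¬(t = A ∨ t = B))).card = p - ({A, B} : Finset (ZMod p)).card := by
  have h1 : (univ.filter (fun t : ZMod p => ¬(t = A ∨ t = B))) = univ \ {A, B} := by
    ext x; simp [not_or]
  rw [h1, card_sdiff_of_subset (subset_univ _), card_univ, ZMod.card]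

lemma cntXi (h2 : (2 : ZMod p) ≠ 0) (hp3 : 3 ≤ p) :
    (univ.filter (fun z : ZMod p × ZMod p × ZMod p =>
      z.1^2 + z.2.1*z.1 + z.2.2 ≠ 0 ∧ z.2.1^2 - 4*z.2.2 ≠ 0)).card = p * ((p-1) * (p-1)) := by
  have h4 : (4 : ZMod p) ≠ 0 := by
    have e : (4 : ZMod p) = 2^2 := by norm_num
    rw [e]; exact pow_ne_zero _ h2
  rw [card_filter]; simp only [Fintype.sum_prod_type]
  have inner : ∀ u s : ZMod p,
      (∑ t : ZMod p, if (u,s,t).1^2 + (u,s,t).2.1*(u,s,t).1 + (u,s,t).2.2 ≠ 0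
          ∧ (u,s,t).2.1^2 - 4*(u,s,t).2.2 ≠ 0 then 1 else 0)
        = if s = -2*u then p - 1 else p - 2 := by
    intro u s
    have hcond : ∀ t : ZMod p,
        ((u,s,t).1^2 + (u,s,t).2.1*(u,s,t).1 + (u,s,t).2.2 ≠ 0
          ∧ (u,s,t).2.1^2 - 4*(u,s,t).2.2 ≠ 0)
        ↔ ¬(t = -(u^2+s*u) ∨ t = 4⁻¹*s^2) := by
      intro t
      simp only [not_or]
      constructor
      · rintro ⟨hq, hd⟩
        constructor
        · intro h; exact hq (by rw [h]; ring)
        · intro h; apply hd; rw [h]; field_simp; ring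
      · rintro ⟨h1, h2'⟩
        constructor
        · intro h; exact h1 (by linear_combination h)
        · intro h; apply h2'; field_simp; linear_combination -h
    have e1 : (∑ t : ZMod p, if (u,s,t).1^2 + (u,s,t).2.1*(u,s,t).1 + (u,s,t).2.2 ≠ 0
          ∧ (u,s,t).2.1^2 - 4*(u,s,t).2.2 ≠ 0 then 1 else 0)
        = (univ.filter (fun t : ZMod p => ¬(t = -(u^2+s*u) ∨ t = 4⁻¹*s^2))).card := by
      rw [card_filter]
      exact Finset.sum_congr rfl (fun t _ => by
        congr 1; simp only [eq_iff_iff]; exact hcond t)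
    rw [e1, card_not_pair]
    by_cases hs : s = -2*u
    · rw [if_pos hs]
      have : -(u^2+s*u) = 4⁻¹*s^2 := by
        rw [hs]
        have : ((-2*u)^2 : ZMod p) = 4 * u^2 := by ring
        rw [this, ← mul_assoc, inv_mul_cancel₀ h4]; ring
      rw [this]
      simp
    · rw [if_neg hs]
      have hne : -(u^2+s*u) ≠ 4⁻¹*s^2 := by
        intro h
        apply hs
        have h' : s^2 + 4*s*u + 4*u^2 = 0 := by
          field_simp at h
          linear_combination -h
        have h'' : (s + 2*u)^2 = 0 := by linear_combination h'
        have := pow_eq_zero_iff (n := 2) (by norm_num) |>.mp h''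
        linear_combination this
      rw [Finset.card_pair hne]
  rw [Finset.sum_congr rfl (fun u _ => Finset.sum_congr rfl (fun s _ => inner u s))]
  have inner2 : ∀ u : ZMod p,
      (∑ s : ZMod p, if s = -2*u then p - 1 else p - 2) = (p-1) + (p-1)*(p-2) := by
    intro u
    rw [← Finset.add_sum_erase _ _ (Finset.mem_univ (-2*u)), if_pos rfl]
    congr 1
    rw [Finset.sum_congr rfl (fun s hs => if_neg (Finset.ne_of_mem_erase hs)),
      Finset.sum_const, Finset.card_erase_of_mem (Finset.mem_univ _), card_univ, ZMod.card,
      smul_eq_mul]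
  rw [Finset.sum_congr rfl (fun u _ => inner2 u), Finset.sum_const, card_univ, ZMod.card,
    smul_eq_mul]
  obtain ⟨q, rfl⟩ : ∃ q, p = q + 3 := ⟨p - 3, by omega⟩
  have e1 : q + 3 - 1 = q + 2 := by omega
  have e2 : q + 3 - 2 = q + 1 := by omega
  rw [e1, e2]
  ring

lemma cntW3 (hp3 : 3 ≤ p) :
    (univ.filter (fun z : ZMod p × ZMod p × ZMod p =>
      z.1 ≠ z.2.1 ∧ z.1 ≠ z.2.2 ∧ z.2.1 ≠ z.2.2)).card = p * ((p-1) * (p-2)) := by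
  rw [card_filter]; simp only [Fintype.sum_prod_type]
  have inner : ∀ u v : ZMod p,
      (∑ e : ZMod p, if (u,v,e).1 ≠ (u,v,e).2.1 ∧ (u,v,e).1 ≠ (u,v,e).2.2
          ∧ (u,v,e).2.1 ≠ (u,v,e).2.2 then 1 else 0)
        = if v = u then 0 else p - 2 := by
    intro u v
    by_cases huv : v = u
    · subst huv
      simp
    · rw [if_neg huv]
      have e1 : (∑ e : ZMod p, if (u,v,e).1 ≠ (u,v,e).2.1 ∧ (u,v,e).1 ≠ (u,v,e).2.2
            ∧ (u,v,e).2.1 ≠ (u,v,e).2.2 then 1 else 0)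
          = (univ.filter (fun e : ZMod p => ¬(e = u ∨ e = v))).card := by
        rw [card_filter]
        refine Finset.sum_congr rfl (fun e _ => by
          congr 1
          simp only [eq_iff_iff, not_or]
          constructor
          · rintro ⟨_, h2, h3⟩; exact ⟨fun h => h2 h.symm, fun h => h3 h.symm⟩
          · rintro ⟨h2, h3⟩
            exact ⟨fun h => huv h.symm, fun h => h2 h.symm, fun h => h3 h.symm⟩)
      rw [e1, card_not_pair, Finset.card_pair (fun h => huv h.symm)]
  rw [Finset.sum_congr rfl (fun u _ => Finset.sum_congr rfl (fun v _ => inner u v))]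
  have inner2 : ∀ u : ZMod p,
      (∑ v : ZMod p, if v = u then 0 else p - 2) = (p-1)*(p-2) := by
    intro u
    rw [← Finset.add_sum_erase _ _ (Finset.mem_univ u), if_pos rfl, zero_add]
    rw [Finset.sum_congr rfl (fun v hv => if_neg (Finset.ne_of_mem_erase hv)),
      Finset.sum_const, Finset.card_erase_of_mem (Finset.mem_univ _), card_univ, ZMod.card,
      smul_eq_mul]
  rw [Finset.sum_congr rfl (fun u _ => inner2 u), Finset.sum_const, card_univ, ZMod.card,
    smul_eq_mul]

lemma key_sum (h2 : (2 : ZMod p) ≠ 0) :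
    3 * (univ.filter (fun w : ZMod p × ZMod p × ZMod p =>
        Dlt w ≠ 0 ∧ Odd (Rc w).card)).card
      + (univ.filter (fun z : (ZMod p × ZMod p) × (ZMod p × ZMod p × ZMod p) =>
        z.1.1 ≠ z.1.2 ∧ Dlt z.2 ≠ 0 ∧ z.1.1 ∈ Rc z.2 ∧ z.1.2 ∈ Rc z.2)).card
    = 3 * (univ.filter (fun z : ZMod p × (ZMod p × ZMod p × ZMod p) =>
        Dlt z.2 ≠ 0 ∧ z.1 ∈ Rc z.2)).card := by
  have eT : (univ.filter (fun w : ZMod p × ZMod p × ZMod p =>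
      Dlt w ≠ 0 ∧ Odd (Rc w).card)).card
      = ∑ w : ZMod p × ZMod p × ZMod p, if Dlt w ≠ 0 ∧ Odd (Rc w).card then 1 else 0 :=
    card_filter _ _
  have eM : (univ.filter (fun z : ZMod p × (ZMod p × ZMod p × ZMod p) =>
      Dlt z.2 ≠ 0 ∧ z.1 ∈ Rc z.2)).card
      = ∑ w : ZMod p × ZMod p × ZMod p, ∑ u : ZMod p,
        if Dlt w ≠ 0 ∧ u ∈ Rc w then 1 else 0 := by
    rw [card_filter, Fintype.sum_prod_type]
    exact Finset.sum_comm
  have eM2 : (univ.filter (fun z : (ZMod p × ZMod p) × (ZMod p × ZMod p × ZMod p) =>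
      z.1.1 ≠ z.1.2 ∧ Dlt z.2 ≠ 0 ∧ z.1.1 ∈ Rc z.2 ∧ z.1.2 ∈ Rc z.2)).card
      = ∑ w : ZMod p × ZMod p × ZMod p, ∑ z : ZMod p × ZMod p,
        if z.1 ≠ z.2 ∧ Dlt w ≠ 0 ∧ z.1 ∈ Rc w ∧ z.2 ∈ Rc w then 1 else 0 := by
    rw [card_filter, Fintype.sum_prod_type]
    exact Finset.sum_comm
  rw [eT, eM, eM2, Finset.mul_sum, Finset.mul_sum, ← Finset.sum_add_distrib]
  apply Finset.sum_congr rfl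
  intro w _
  by_cases hΔ : Dlt w = 0
  · simp [hΔ]
  · have hA : (if Dlt w ≠ 0 ∧ Odd (Rc w).card then 1 else 0)
        = (if Odd (Rc w).card then 1 else 0) := by simp [hΔ]
    have hC : (∑ u : ZMod p, if Dlt w ≠ 0 ∧ u ∈ Rc w then (1:ℕ) else 0) = (Rc w).card := by
      rw [Finset.sum_congr rfl (fun u _ => by
        simp only [hΔ, ne_eq, not_false_iff, true_and] : ∀ u ∈ univ,
          (if Dlt w ≠ 0 ∧ u ∈ Rc w then (1:ℕ) else 0) = if u ∈ Rc w then 1 else 0)]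
      rw [← card_filter, Finset.filter_mem_eq_inter, Finset.univ_inter]
    have hB : (∑ z : ZMod p × ZMod p, if z.1 ≠ z.2 ∧ Dlt w ≠ 0 ∧ z.1 ∈ Rc w ∧ z.2 ∈ Rc w
          then (1:ℕ) else 0)
        = (Rc w).card * (Rc w).card - (Rc w).card := by
      rw [← card_filter]
      have e1 : (univ.filter (fun z : ZMod p × ZMod p =>
          z.1 ≠ z.2 ∧ Dlt w ≠ 0 ∧ z.1 ∈ Rc w ∧ z.2 ∈ Rc w))
          = (Rc w ×ˢ Rc w).filter (fun z => ¬ z.1 = z.2) := by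
        ext z
        simp only [mem_filter, mem_univ, true_and, Finset.mem_product, ne_eq, hΔ,
          not_false_iff]
        tauto
      rw [e1]
      have e2 := Finset.card_filter_add_card_filter_not
        (s := Rc w ×ˢ Rc w) (p := fun z => z.1 = z.2)
      rw [Finset.card_product] at e2
      have e3 : ((Rc w ×ˢ Rc w).filter (fun z => z.1 = z.2)).card = (Rc w).card := by
        apply Finset.card_nbij' (i := fun z => z.1) (j := fun u => (u, u))
        · intro z hz
          simp only [Finset.mem_coe, mem_filter, Finset.mem_product] at hz
          exact hz.1.1
        · intro u hu
          simp only [Finset.mem_coe, mem_filter, Finset.mem_product]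
          exact ⟨⟨hu, hu⟩, trivial⟩
        · intro z hz
          simp only [Finset.mem_coe, mem_filter] at hz
          exact Prod.ext rfl hz.2
        · intro u hu
          rfl
      omega
    rw [hA, hB, hC]
    rcases root_structure h2 w hΔ with h | h | h <;> rw [h] <;> decide

lemma reduce5 (h2 : (2 : ZMod p) ≠ 0) :
    (univ.filter (fun v : ZMod p × ZMod p × ZMod p × ZMod p × ZMod p =>
      (wcOf v).Δ ≠ 0 ∧ Even (wcPointCount (wcOf v)))).card
    = p^2 * (univ.filter (fun w : ZMod p × ZMod p × ZMod p =>
      Dlt w ≠ 0 ∧ Odd (Rc w).card)).card := by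
  have h4 : (4 : ZMod p) ≠ 0 := by
    have e : (4 : ZMod p) = 2^2 := by norm_num
    rw [e]; exact pow_ne_zero _ h2
  have h16 : (16 : ZMod p) ≠ 0 := by
    have e : (16 : ZMod p) = 2^4 := by norm_num
    rw [e]; exact pow_ne_zero _ h2
  have h64 : (64 : ZMod p) ≠ 0 := by
    have e : (64 : ZMod p) = 2^6 := by norm_num
    rw [e]; exact pow_ne_zero _ h2
  have h4096 : (4096 : ZMod p) ≠ 0 := by
    have e : (4096 : ZMod p) = 2^12 := by norm_num
    rw [e]; exact pow_ne_zero _ h2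
  have hiff : ∀ a₁ a₂ a₃ a₄ a₆ : ZMod p,
      ((wcOf (a₁, a₂, a₃, a₄, a₆)).Δ ≠ 0 ∧ Even (wcPointCount (wcOf (a₁, a₂, a₃, a₄, a₆)))) ↔
      (Dlt (a₁^2 + 4*a₂, 16*a₄ + 8*(a₁*a₃), 64*a₆ + 16*a₃^2) ≠ 0 ∧
        Odd (Rc (a₁^2 + 4*a₂, 16*a₄ + 8*(a₁*a₃), 64*a₆ + 16*a₃^2)).card) := by
    intro a₁ a₂ a₃ a₄ a₆
    have hD : Dlt ((a₁^2 + 4*a₂ : ZMod p), 16*a₄ + 8*(a₁*a₃), 64*a₆ + 16*a₃^2)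
        = 4096 * (wcOf (a₁, a₂, a₃, a₄, a₆)).Δ := delta_shift a₁ a₂ a₃ a₄ a₆
    constructor
    · rintro ⟨hΔ, hE⟩
      refine ⟨by rw [hD]; exact mul_ne_zero h4096 hΔ, ?_⟩
      have := (parity_lemma h2 (a₁^2 + 4*a₂) (16*a₄ + 8*(a₁*a₃)) (64*a₆ + 16*a₃^2)).mp
        (pcount_shift h2 a₁ a₂ a₃ a₄ a₆ ▸ hE)
      exact this
    · rintro ⟨hΔ, hO⟩
      refine ⟨fun h => hΔ (by rw [hD, h, mul_zero]), ?_⟩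
      rw [pcount_shift h2 a₁ a₂ a₃ a₄ a₆]
      exact (parity_lemma h2 _ _ _).mpr hO
  have step1 : (univ.filter (fun v : ZMod p × ZMod p × ZMod p × ZMod p × ZMod p =>
      (wcOf v).Δ ≠ 0 ∧ Even (wcPointCount (wcOf v)))).card
      = (univ.filter (fun z : (ZMod p × ZMod p) × (ZMod p × ZMod p × ZMod p) =>
        Dlt z.2 ≠ 0 ∧ Odd (Rc z.2).card)).card := by
    refine Finset.card_bij'
      (fun v _ => ((v.1, v.2.2.1), (v.1^2 + 4*v.2.1, 16*v.2.2.2.1 + 8*(v.1*v.2.2.1),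
        64*v.2.2.2.2 + 16*v.2.2.1^2)))
      (fun z _ => (z.1.1, 4⁻¹*(z.2.1 - z.1.1^2), z.1.2, 16⁻¹*(z.2.2.1 - 8*(z.1.1*z.1.2)),
        64⁻¹*(z.2.2.2 - 16*z.1.2^2))) ?hi ?hj ?li ?ri
    case hi =>
      rintro ⟨a₁, a₂, a₃, a₄, a₆⟩ hv
      simp only [mem_filter, mem_univ, true_and] at hv ⊢
      exact (hiff a₁ a₂ a₃ a₄ a₆).mp hv
    case hj =>
      rintro ⟨⟨x, y⟩, c₂, c₄, c₆⟩ hz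
      simp only [mem_filter, mem_univ, true_and] at hz ⊢
      refine (hiff x (4⁻¹*(c₂ - x^2)) y (16⁻¹*(c₄ - 8*(x*y))) (64⁻¹*(c₆ - 16*y^2))).mpr ?_
      have e1 : x^2 + 4*(4⁻¹*(c₂ - x^2)) = c₂ := by field_simp; ring
      have e2 : 16*(16⁻¹*(c₄ - 8*(x*y))) + 8*(x*y) = c₄ := by field_simp; ring
      have e3 : 64*(64⁻¹*(c₆ - 16*y^2)) + 16*y^2 = c₆ := by field_simp; ring
      rw [e1, e2, e3]
      exact hz
    case li =>
      rintro ⟨a₁, a₂, a₃, a₄, a₆⟩ hv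
      simp only
      refine Prod.ext rfl (Prod.ext ?_ (Prod.ext rfl (Prod.ext ?_ ?_))) <;> simp only
      · field_simp; ring
      · field_simp; ring
      · field_simp; ring
    case ri =>
      rintro ⟨⟨x, y⟩, c₂, c₄, c₆⟩ hz
      simp only
      refine Prod.ext rfl (Prod.ext ?_ (Prod.ext ?_ ?_)) <;> simp only
      · field_simp; ring
      · field_simp; ring
      · field_simp; ring
  rw [step1, card_filter, Fintype.sum_prod_type]
  have inner : ∀ xy : ZMod p × ZMod p,
      (∑ w : ZMod p × ZMod p × ZMod p, if Dlt w ≠ 0 ∧ Odd (Rc w).card then 1 else 0)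
      = (univ.filter (fun w : ZMod p × ZMod p × ZMod p =>
          Dlt w ≠ 0 ∧ Odd (Rc w).card)).card := fun _ => (card_filter _ _).symm
  rw [Finset.sum_congr rfl (fun xy _ => inner xy), Finset.sum_const, card_univ,
    Fintype.card_prod, ZMod.card, smul_eq_mul, pow_two]

end Aux

open scoped Classical in
/-- For an odd prime `p`, the weighted number of isomorphism classes of elliptic curves over
`𝔽_p` with nontrivial rational 2-torsion (equivalently, of even order) is
`S*_{2,0}(p) = Σ 1/|Aut E| = (2p - 1)/3`; the weighted count is computed by counting
nonsingular Weierstrass equations, each isomorphism class accounting for `(p-1)p³/|Aut E|`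
of them. -/
theorem weighted_count_two_torsion (p : ℕ) [Fact p.Prime] (hp : p ≠ 2) :
    (((p : ℚ) - 1) * p ^ 3)⁻¹ *
      ((Finset.univ.filter (fun v : ZMod p × ZMod p × ZMod p × ZMod p × ZMod p =>
        (wcOf v).Δ ≠ 0 ∧ Even (wcPointCount (wcOf v)))).card : ℚ) =
    (2 * (p : ℚ) - 1) / 3 := by
  have hprime : p.Prime := Fact.out
  have hp3 : 3 ≤ p := by
    have := hprime.two_le
    omega
  have h2 : (2 : ZMod p) ≠ 0 := by
    intro h
    have h' : ((2:ℕ) : ZMod p) = 0 := by exact_mod_cast h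
    have hd := (ZMod.natCast_eq_zero_iff 2 p).mp h'
    exact hp ((Nat.prime_dvd_prime_iff_eq hprime Nat.prime_two).mp hd)
  have e1 := reduce5 (p := p) h2
  have e2 := key_sum (p := p) h2
  have e3 := (cntM_bij (p := p) h2).trans (cntXi h2 hp3)
  have e4 := (cntM2_bij (p := p) h2).trans (cntW3 hp3)
  rw [e4, e3] at e2
  rw [e1]
  have e2q := congrArg (Nat.cast (R := ℚ)) e2
  push_cast [Nat.cast_sub (by omega : 1 ≤ p), Nat.cast_sub (by omega : 2 ≤ p)] at e2q
  have hp0 : (p:ℚ) ≠ 0 := by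
    exact_mod_cast Nat.cast_ne_zero.mpr (by omega)
  have hp1 : (p:ℚ) - 1 ≠ 0 := by
    have : (3:ℚ) ≤ (p:ℚ) := by exact_mod_cast hp3
    intro h
    nlinarith
  push_cast
  field_simp
  linear_combination e2q
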